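/- Let F be a family of ordered graphs (graphs equipped with a linear order on the vertex set), and let Forb⁺_<(F) be the class of ordered graphs containing no order-preserving non-induced copy of any member of F. Then for every ℓ ∈ ℕ₊: (for all n there exists an ordered graph in Forb⁺_<(F) on n vertices whose graph part contains a non-induced copy of T_{n,ℓ}) if and only if ℓ < χ_<(F), where χ_<(F) := inf{χ_<(F') : F' ∈ F} is the infimum of interval chromatic numbers. Consequently the abstract chromatic number equals max{χ_<(F), 1}. -/

import Mathlib

/-- A graph `H` contains a non-induced copy of `G` (order ignored). -/
def HasCopy {α β : Type*} (G : SimpleGraph α) (H : SimpleGraph β) : Prop :=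
  ∃ f : α ↪ β, ∀ a b, G.Adj a b → H.Adj (f a) (f b)

/-- The ordered graph `H` (on `Fin b` with its natural order) contains an order-preserving
non-induced copy of the ordered graph `G` (on `Fin a`). -/
def HasOrderedCopy {a b : ℕ} (G : SimpleGraph (Fin a)) (H : SimpleGraph (Fin b)) : Prop :=
  ∃ f : Fin a ↪ Fin b, StrictMono f ∧ ∀ v w, G.Adj v w → H.Adj (f v) (f w)

/-- The `n`-vertex ordered graphs containing no order-preserving non-induced copy of any member
of the family `F` of ordered graphs. -/
def ForbOrd (F : Set ((m : ℕ) × SimpleGraph (Fin m))) (n : ℕ) : Set (SimpleGraph (Fin n)) :=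
  {G | ∀ p ∈ F, ¬ HasOrderedCopy p.2 G}

/-- `c` is a proper interval coloring of the ordered graph `G`: it is a proper coloring whose
color classes are intervals of the linear order. -/
def IsIntervalColoring {m ℓ : ℕ} (G : SimpleGraph (Fin m)) (c : Fin m → Fin ℓ) : Prop :=
  (∀ v w, G.Adj v w → c v ≠ c w) ∧
    ∀ u v w : Fin m, u ≤ v → v ≤ w → c u = c w → c u = c v

/-- The interval chromatic number `χ_<` of an ordered graph. -/
noncomputable def intervalChromatic {m : ℕ} (G : SimpleGraph (Fin m)) : ℕ∞ :=
  sInf ((fun ℓ : ℕ => (ℓ : ℕ∞)) '' {ℓ : ℕ | ∃ c : Fin m → Fin ℓ, IsIntervalColoring G c})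

open Finset


lemma card_residue (ℓ m : ℕ) (hl : 0 < ℓ) (k : ℕ) (hk : k < ℓ) :
    ((univ : Finset (Fin (ℓ * m))).filter (fun a : Fin (ℓ * m) => (a : ℕ) % ℓ = k)).card = m := by
  have : ((univ : Finset (Fin (ℓ * m))).filter (fun a : Fin (ℓ * m) => (a : ℕ) % ℓ = k)).card
      = ((univ : Finset (Fin m))).card := by
    apply Finset.card_bij' (fun (a : Fin (ℓ * m)) _ => (⟨(a : ℕ) / ℓ, by
        have ha := a.2
        exact Nat.div_lt_of_lt_mul ha⟩ : Fin m))
      (fun (b : Fin m) _ => (⟨(b : ℕ) * ℓ + k, by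
        have hb := b.2
        calc (b : ℕ) * ℓ + k < (b : ℕ) * ℓ + ℓ := by omega
        _ = ((b : ℕ) + 1) * ℓ := by ring
        _ ≤ m * ℓ := Nat.mul_le_mul_right _ (by omega)
        _ = ℓ * m := mul_comm _ _⟩ : Fin (ℓ * m)))
    case hi => intro a ha; exact mem_univ _
    case hj =>
      intro b hb
      simp only [mem_filter, mem_univ, true_and]
      rw [Nat.mul_add_mod', Nat.mod_eq_of_lt hk]
    case left_inv =>
      intro a ha
      simp only [mem_filter, mem_univ, true_and] at ha
      apply Fin.ext
      simp only []
      rw [mul_comm, ← ha]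
      exact Nat.div_add_mod _ _
    case right_inv =>
      intro b hb
      apply Fin.ext
      simp only []
      rw [mul_comm, Nat.mul_add_div hl, Nat.div_eq_of_lt hk, Nat.add_zero]
  simpa using this


lemma greedy_main {n ℓ : ℕ} (cls : Fin n → Fin ℓ) :
    ∀ mm : ℕ, ∀ c : Fin mm → Fin ℓ,
      (∀ u v w : Fin mm, u ≤ v → v ≤ w → c u = c w → c u = c v) →
      ∀ x : ℕ, ∀ A : Finset (Fin ℓ),
        (Finset.image c Finset.univ).card ≤ A.card →
        (∀ k ∈ A, mm ≤ ((univ : Finset (Fin n)).filter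
            (fun y : Fin n => x ≤ (y : ℕ) ∧ cls y = k)).card) →
        ∃ f : Fin mm → Fin n, StrictMono f ∧ (∀ v, x ≤ (f v : ℕ)) ∧ (∀ v, cls (f v) ∈ A) ∧
          (∀ v w, c v = c w ↔ cls (f v) = cls (f w)) := by
  intro mm
  induction mm using Nat.strong_induction_on with
  | _ mm IH =>
  intro c hc x A himage hA
  classical
  rcases Nat.eq_zero_or_pos mm with hmm | hmm
  · subst hmm
    exact ⟨Fin.elim0, fun a => a.elim0, fun a => a.elim0, fun a => a.elim0, fun a => a.elim0⟩
  -- first color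
  set v0 : Fin mm := ⟨0, hmm⟩ with hv0
  set k₀ : Fin ℓ := c v0 with hk₀
  -- length of first interval
  have hexP : ∃ t : ℕ, t = mm ∨ ∃ h : t < mm, c ⟨t, h⟩ ≠ k₀ := ⟨mm, Or.inl rfl⟩
  set s : ℕ := Nat.find hexP with hs_def
  have hsP : s = mm ∨ ∃ h : s < mm, c ⟨s, h⟩ ≠ k₀ := Nat.find_spec hexP
  have hs_le : s ≤ mm := Nat.find_min' hexP (Or.inl rfl)
  have hs_pos : 0 < s := by
    rcases Nat.eq_zero_or_pos s with h0 | h0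
    · exfalso
      rw [h0] at hsP
      rcases hsP with h | ⟨h, hne⟩
      · omega
      · exact hne rfl
    · exact h0
  have hcol_lt : ∀ i : Fin mm, (i : ℕ) < s → c i = k₀ := by
    intro i hi
    have := Nat.find_min hexP hi
    push_neg at this
    have h2 := this.2 i.2
    simpa using h2
  have hcol_ge : ∀ i : Fin mm, s ≤ (i : ℕ) → c i ≠ k₀ := by
    intro i hi hcon
    rcases hsP with h | ⟨h, hne⟩
    · omega
    · exact hne ((hc v0 ⟨s, h⟩ i (by simp [Fin.le_def, hv0]) (by simp [Fin.le_def, hi])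
        hcon.symm).symm)
  -- the nonempty family
  have hk₀mem : k₀ ∈ Finset.image c Finset.univ := mem_image_of_mem c (mem_univ v0)
  have hAne : A.Nonempty := by
    apply card_pos.mp
    have h1 : 0 < (Finset.image c Finset.univ).card := card_pos.mpr ⟨k₀, hk₀mem⟩
    omega
  -- the greedy prefix
  set Bset : ℕ → Fin ℓ → Finset (Fin n) := fun N k =>
    univ.filter fun y : Fin n => x ≤ (y : ℕ) ∧ (y : ℕ) < N ∧ cls y = k with hBset
  have hexQ : ∃ N : ℕ, ∃ k ∈ A, s ≤ (Bset N k).card := by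
    obtain ⟨k1, hk1⟩ := hAne
    refine ⟨n, k1, hk1, ?_⟩
    have hsub : (univ.filter fun y : Fin n => x ≤ (y : ℕ) ∧ cls y = k1) ⊆ Bset n k1 := by
      intro z hz
      simp only [hBset, mem_filter, mem_univ, true_and] at hz ⊢
      exact ⟨hz.1, z.2, hz.2⟩
    have := card_le_card hsub
    have h2 := hA k1 hk1
    omega
  set N : ℕ := Nat.find hexQ with hN_def
  obtain ⟨k, hkA, hks⟩ : ∃ k ∈ A, s ≤ (Bset N k).card := Nat.find_spec hexQ
  have hNx : x < N := by
    have hne : (Bset N k).Nonempty := card_pos.mp (by omega)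
    obtain ⟨y, hy⟩ := hne
    simp only [hBset, mem_filter, mem_univ, true_and] at hy
    omega
  have hQm : ∀ k' ∈ A, (Bset (N - 1) k').card < s := by
    intro k' hk'
    have := Nat.find_min hexQ (show N - 1 < N by omega)
    push_neg at this
    exact this k' hk'
  have hother : ∀ k' ∈ A, k' ≠ k → (Bset N k').card < s := by
    intro k' hk' hne
    -- there is an element at position N-1 of class k
    have hsub0 : Bset (N - 1) k ⊆ Bset N k := by
      intro z hz
      simp only [hBset, mem_filter, mem_univ, true_and] at hz ⊢
      exact ⟨hz.1, by omega, hz.2.2⟩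
    have hcard0 := hQm k hkA
    have hnsub : ¬ Bset N k ⊆ Bset (N - 1) k := by
      intro hcon
      have := card_le_card hcon
      omega
    obtain ⟨y, hyN, hyN1⟩ := not_subset.mp hnsub
    simp only [hBset, mem_filter, mem_univ, true_and, not_and] at hyN hyN1
    have hyval : (y : ℕ) = N - 1 := by
      by_contra hcon
      exact (hyN1 hyN.1 (by omega)) hyN.2.2
    -- k' class does not include N-1
    have hsub' : Bset N k' ⊆ Bset (N - 1) k' := by
      intro z hz
      simp only [hBset, mem_filter, mem_univ, true_and] at hz ⊢
      refine ⟨hz.1, ?_, hz.2.2⟩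
      by_contra hcon
      have hzval : (z : ℕ) = N - 1 := by omega
      have : z = y := Fin.ext (by omega)
      rw [this] at hz
      exact hne (hz.2.2.symm.trans hyN.2.2)
    calc (Bset N k').card ≤ (Bset (N - 1) k').card := card_le_card hsub'
      _ < s := hQm k' hk'
  -- remaining counts after N
  have hrest : ∀ k' ∈ A, k' ≠ k → mm - s ≤ ((univ : Finset (Fin n)).filter
      (fun y : Fin n => N ≤ (y : ℕ) ∧ cls y = k')).card := by
    intro k' hk' hne
    have hsplit : (univ.filter fun y : Fin n => x ≤ (y : ℕ) ∧ cls y = k') ⊆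
        Bset N k' ∪ (univ.filter fun y : Fin n => N ≤ (y : ℕ) ∧ cls y = k') := by
      intro z hz
      simp only [hBset, mem_union, mem_filter, mem_univ, true_and] at hz ⊢
      by_cases hzN : (z : ℕ) < N
      · exact Or.inl ⟨hz.1, hzN, hz.2⟩
      · exact Or.inr ⟨by omega, hz.2⟩
    have h1 := card_le_card hsplit
    have h2 := Finset.card_union_le (Bset N k')
      (univ.filter fun y : Fin n => N ≤ (y : ℕ) ∧ cls y = k')
    have h3 := hA k' hk'
    have h4 := hother k' hk' hne
    omega
  -- pick the first s elements
  obtain ⟨S, hS_sub, hS_card⟩ := Finset.exists_subset_card_eq hks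
  set g1 := S.orderEmbOfFin hS_card with hg1_def
  have hg1 : ∀ i : Fin s, g1 i ∈ Bset N k := fun i => hS_sub (S.orderEmbOfFin_mem hS_card i)
  have hg1' : ∀ i : Fin s, x ≤ (g1 i : ℕ) ∧ (g1 i : ℕ) < N ∧ cls (g1 i) = k := by
    intro i
    have := hg1 i
    simpa only [hBset, mem_filter, mem_univ, true_and] using this
  -- recursion
  set mm' : ℕ := mm - s with hmm'_def
  set c' : Fin mm' → Fin ℓ := fun i => c ⟨s + (i : ℕ), by omega⟩ with hc'_def
  have hc' : ∀ u v w : Fin mm', u ≤ v → v ≤ w → c' u = c' w → c' u = c' v := by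
    intro u v w huv hvw heq
    exact hc ⟨s + (u : ℕ), by omega⟩ ⟨s + (v : ℕ), by omega⟩ ⟨s + (w : ℕ), by omega⟩
      (by simp only [Fin.mk_le_mk]; exact by have := Fin.le_def.mp huv; omega)
      (by simp only [Fin.mk_le_mk]; exact by have := Fin.le_def.mp hvw; omega) heq
  have himage' : (Finset.image c' Finset.univ).card ≤ (A.erase k).card := by
    have hsub : Finset.image c' Finset.univ ⊆ (Finset.image c Finset.univ).erase k₀ := by
      intro col hcol
      obtain ⟨i, _, rfl⟩ := Finset.mem_image.mp hcol
      refine Finset.mem_erase.mpr ⟨?_, ?_⟩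
      · exact hcol_ge ⟨s + (i : ℕ), by omega⟩ (by simp)
      · exact mem_image_of_mem c (mem_univ _)
    have h1 := card_le_card hsub
    have h2 := Finset.card_erase_of_mem hk₀mem
    have h3 := Finset.card_erase_of_mem hkA
    have h4 : 0 < (Finset.image c Finset.univ).card := card_pos.mpr ⟨k₀, hk₀mem⟩
    omega
  have hA' : ∀ k' ∈ A.erase k, mm' ≤ ((univ : Finset (Fin n)).filter
      (fun y : Fin n => N ≤ (y : ℕ) ∧ cls y = k')).card := by
    intro k' hk'
    exact hrest k' (Finset.mem_of_mem_erase hk') (Finset.ne_of_mem_erase hk')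
  obtain ⟨f', hf'mono, hf'ge, hf'cls, hf'iff⟩ :=
    IH mm' (by omega) c' hc' N (A.erase k) himage' hA'
  -- glue
  refine ⟨fun v => if h : (v : ℕ) < s then g1 ⟨(v : ℕ), h⟩
    else f' ⟨(v : ℕ) - s, by omega⟩, ?_, ?_, ?_, ?_⟩
  · intro a b hab
    have habv : (a : ℕ) < (b : ℕ) := hab
    by_cases ha : (a : ℕ) < s <;> by_cases hb : (b : ℕ) < s
    · simp only [dif_pos ha, dif_pos hb]
      exact g1.strictMono (by exact Fin.mk_lt_mk.mpr habv)
    · simp only [dif_pos ha, dif_neg hb]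
      have h1 : (g1 ⟨(a : ℕ), ha⟩ : ℕ) < N := (hg1' _).2.1
      have h2 : N ≤ (f' ⟨(b : ℕ) - s, by omega⟩ : ℕ) := hf'ge _
      exact Fin.lt_def.mpr (by omega)
    · omega
    · simp only [dif_neg ha, dif_neg hb]
      exact hf'mono (Fin.mk_lt_mk.mpr (by omega))
  · intro v
    by_cases hv : (v : ℕ) < s
    · simp only [dif_pos hv]; exact (hg1' _).1
    · simp only [dif_neg hv]
      have := hf'ge ⟨(v : ℕ) - s, by omega⟩
      omega
  · intro v
    by_cases hv : (v : ℕ) < s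
    · simp only [dif_pos hv, (hg1' ⟨(v : ℕ), hv⟩).2.2]; exact hkA
    · simp only [dif_neg hv]
      exact Finset.mem_of_mem_erase (hf'cls _)
  · intro v w
    have hkey : ∀ u : Fin mm, ∀ h : ¬ (u : ℕ) < s,
        c u = c' ⟨(u : ℕ) - s, by omega⟩ := by
      intro u h
      simp only [hc'_def]
      congr 1
      exact Fin.ext (by simp; omega)
    by_cases hv : (v : ℕ) < s <;> by_cases hw : (w : ℕ) < s
    · simp only [dif_pos hv, dif_pos hw]
      constructor
      · intro _; rw [(hg1' ⟨(v : ℕ), hv⟩).2.2, (hg1' ⟨(w : ℕ), hw⟩).2.2]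
      · intro _; rw [hcol_lt v hv, hcol_lt w hw]
    · simp only [dif_pos hv, dif_neg hw]
      apply iff_of_false
      · intro hcon
        exact hcol_ge w (by omega) (hcon ▸ hcol_lt v hv)
      · intro hcon
        rw [(hg1' ⟨(v : ℕ), hv⟩).2.2] at hcon
        exact Finset.ne_of_mem_erase (hf'cls _) hcon.symm
    · simp only [dif_neg hv, dif_pos hw]
      apply iff_of_false
      · intro hcon
        exact hcol_ge v (by omega) (hcon.symm ▸ hcol_lt w hw)
      · intro hcon
        rw [(hg1' ⟨(w : ℕ), hw⟩).2.2] at hcon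
        exact Finset.ne_of_mem_erase (hf'cls _) hcon
    · simp only [dif_neg hv, dif_neg hw, hkey v hv, hkey w hw]
      exact hf'iff _ _

lemma exists_forb (F : Set ((m : ℕ) × SimpleGraph (Fin m))) (ℓ n : ℕ) (hl : 0 < ℓ)
    (hlt : (ℓ : ℕ∞) < ⨅ p ∈ F, intervalChromatic p.2) :
    ∃ G ∈ ForbOrd F n, HasCopy (SimpleGraph.turanGraph n ℓ) G := by
  classical
  set key : Fin n → ℕ := fun v => ((v : ℕ) % ℓ) * n + (v : ℕ) / ℓ with hkey
  have hdivlt : ∀ v : Fin n, (v : ℕ) / ℓ < n := fun v =>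
    lt_of_le_of_lt (Nat.div_le_self _ _) v.2
  have hkeyinj : Function.Injective key := by
    intro a b hab
    simp only [hkey] at hab
    have e1 : (((a : ℕ) % ℓ) * n + (a : ℕ) / ℓ) % n = (a : ℕ) / ℓ := by
      rw [Nat.mul_add_mod', Nat.mod_eq_of_lt (hdivlt a)]
    have e2 : (((b : ℕ) % ℓ) * n + (b : ℕ) / ℓ) % n = (b : ℕ) / ℓ := by
      rw [Nat.mul_add_mod', Nat.mod_eq_of_lt (hdivlt b)]
    have hdiv : (a : ℕ) / ℓ = (b : ℕ) / ℓ := by rw [← e1, ← e2, hab]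
    have hmul : ((a : ℕ) % ℓ) * n = ((b : ℕ) % ℓ) * n := by omega
    have hn : 0 < n := lt_of_le_of_lt (Nat.zero_le _) (hdivlt a)
    have hmod : (a : ℕ) % ℓ = (b : ℕ) % ℓ := Nat.eq_of_mul_eq_mul_right hn hmul
    have : (a : ℕ) = (b : ℕ) := by
      rw [← Nat.div_add_mod (a : ℕ) ℓ, ← Nat.div_add_mod (b : ℕ) ℓ, hdiv, hmod]
    exact Fin.ext this
  set s : Finset ℕ := Finset.image key univ with hs
  have hcard : s.card = n := by
    rw [hs, card_image_of_injective _ hkeyinj, card_univ, Fintype.card_fin]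
  set e := s.orderIsoOfFin hcard with he
  set ρ : Fin n → Fin n := fun a => e.symm ⟨key a, mem_image_of_mem key (mem_univ a)⟩ with hρ
  have hρord : ∀ a b : Fin n, ρ a ≤ ρ b ↔ key a ≤ key b := by
    intro a b
    rw [hρ]
    simp only []
    rw [← e.le_iff_le]
    simp only [OrderIso.apply_symm_apply]
    rfl
  have hρinj : Function.Injective ρ := by
    intro a b hab
    apply hkeyinj
    have h1 := (hρord a b).mp (le_of_eq hab)
    have h2 := (hρord b a).mp (le_of_eq hab.symm)
    omega
  set ρe : Fin n ≃ Fin n := Equiv.ofBijective ρ (Finite.injective_iff_bijective.mp hρinj)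
    with hρe
  refine ⟨SimpleGraph.map ρe.toEmbedding (SimpleGraph.turanGraph n ℓ), ?_, ?_⟩
  · -- in ForbOrd
    rintro p hp ⟨f, hfmono, hfadj⟩
    set colorOf : Fin n → ℕ := fun y => (ρe.symm y : ℕ) % ℓ with hcolorOf
    set c : Fin p.1 → Fin ℓ := fun v => ⟨colorOf (f v), Nat.mod_lt _ hl⟩ with hcdef
    have hmono : ∀ x y : Fin n, x ≤ y → colorOf x ≤ colorOf y := by
      intro x y hxy
      have hx : ρ (ρe.symm x) = x := ρe.apply_symm_apply x
      have hy : ρ (ρe.symm y) = y := ρe.apply_symm_apply y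
      have hkle : key (ρe.symm x) ≤ key (ρe.symm y) := by
        rw [← hρord]
        rw [hx, hy]; exact hxy
      show ((ρe.symm x : Fin n) : ℕ) % ℓ ≤ ((ρe.symm y : Fin n) : ℕ) % ℓ
      by_contra hcon
      push_neg at hcon
      have h9 := hdivlt (ρe.symm y)
      have hstrict : key (ρe.symm y) < key (ρe.symm x) := by
        calc key (ρe.symm y)
            = (((ρe.symm y : Fin n) : ℕ) % ℓ) * n + ((ρe.symm y : Fin n) : ℕ) / ℓ := rfl
          _ < (((ρe.symm y : Fin n) : ℕ) % ℓ) * n + n := by omega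
          _ = (((ρe.symm y : Fin n) : ℕ) % ℓ + 1) * n := by ring
          _ ≤ (((ρe.symm x : Fin n) : ℕ) % ℓ) * n := Nat.mul_le_mul_right n (by omega)
          _ ≤ key (ρe.symm x) := Nat.le_add_right _ _
      exact absurd hkle (not_le.mpr hstrict)
    have hproper : ∀ v w, p.2.Adj v w → c v ≠ c w := by
      intro v w hadj hcon
      have hG := hfadj v w hadj
      rw [SimpleGraph.map_adj] at hG
      obtain ⟨a, b, hab, hfa, hfb⟩ := hG
      have ha : a = ρe.symm (f v) := by rw [← hfa]; simp
      have hb : b = ρe.symm (f w) := by rw [← hfb]; simp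
      have htur : ((a : ℕ) % ℓ) ≠ ((b : ℕ) % ℓ) := by
        simpa [SimpleGraph.turanGraph] using hab
      apply htur
      have := Fin.mk.inj_iff.mp hcon
      simp only [hcolorOf] at this
      rw [ha, hb]
      exact this
    have hinterval : ∀ u v w : Fin p.1, u ≤ v → v ≤ w → c u = c w → c u = c v := by
      intro u v w huv hvw heq
      have h1 := hmono (f u) (f v) (hfmono.monotone huv)
      have h2 := hmono (f v) (f w) (hfmono.monotone hvw)
      have h3 := Fin.mk.inj_iff.mp heq
      exact Fin.ext (by simp only [hcdef] at h3 ⊢; omega)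
    have hmem : ℓ ∈ {ℓ' : ℕ | ∃ c : Fin p.1 → Fin ℓ', IsIntervalColoring p.2 c} :=
      ⟨c, hproper, hinterval⟩
    have hle : intervalChromatic p.2 ≤ (ℓ : ℕ∞) := sInf_le ⟨ℓ, hmem, rfl⟩
    have hle2 : (⨅ p ∈ F, intervalChromatic p.2) ≤ (ℓ : ℕ∞) :=
      le_trans (iInf₂_le p hp) hle
    exact absurd hle2 (not_le.mpr hlt)
  · exact ⟨ρe.toEmbedding, fun a b h => SimpleGraph.map_adj_apply.mpr h⟩

lemma forb_fail (F : Set ((m : ℕ) × SimpleGraph (Fin m))) (ℓ : ℕ) (hl : 0 < ℓ)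
    (hle : (⨅ p ∈ F, intervalChromatic p.2) ≤ (ℓ : ℕ∞))
    (H : ∀ n : ℕ, ∃ G ∈ ForbOrd F n, HasCopy (SimpleGraph.turanGraph n ℓ) G) : False := by
  classical
  obtain ⟨p, hp, hple⟩ : ∃ p ∈ F, intervalChromatic p.2 ≤ (ℓ : ℕ∞) := by
    by_contra hcon
    push_neg at hcon
    have h1 : ((ℓ + 1 : ℕ) : ℕ∞) ≤ ⨅ p ∈ F, intervalChromatic p.2 := by
      apply le_iInf₂
      intro p hp
      have := hcon p hp
      push_cast
      exact Order.add_one_le_of_lt this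
    have h2 := le_trans h1 hle
    have : ℓ + 1 ≤ ℓ := by exact_mod_cast h2
    omega
  obtain ⟨ℓ', hℓ'le, c₀, hc₀⟩ :
      ∃ ℓ' ≤ ℓ, ∃ c₀ : Fin p.1 → Fin ℓ', IsIntervalColoring p.2 c₀ := by
    by_contra hcon
    push_neg at hcon
    have h1 : ((ℓ + 1 : ℕ) : ℕ∞) ≤ intervalChromatic p.2 := by
      apply le_sInf
      rintro x ⟨ℓ', hℓ'mem, rfl⟩
      rcases le_or_gt ℓ' ℓ with h | h
      · obtain ⟨c₁, hc₁⟩ := hℓ'mem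
        exact absurd hc₁ (hcon ℓ' h c₁)
      · show ((ℓ + 1 : ℕ) : ℕ∞) ≤ (ℓ' : ℕ∞)
        exact_mod_cast h
    have h2 := le_trans h1 hple
    have : ℓ + 1 ≤ ℓ := by exact_mod_cast h2
    omega
  have hcprop : ∀ v w, p.2.Adj v w →
      Fin.castLE hℓ'le (c₀ v) ≠ Fin.castLE hℓ'le (c₀ w) := by
    intro v w hadj hcon
    exact hc₀.1 v w hadj (Fin.castLE_injective hℓ'le hcon)
  have hcint : ∀ u v w : Fin p.1, u ≤ v → v ≤ w →
      Fin.castLE hℓ'le (c₀ u) = Fin.castLE hℓ'le (c₀ w) →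
      Fin.castLE hℓ'le (c₀ u) = Fin.castLE hℓ'le (c₀ v) := by
    intro u v w huv hvw heq
    exact congrArg _ (hc₀.2 u v w huv hvw (Fin.castLE_injective hℓ'le heq))
  obtain ⟨G, hG, g, hg⟩ := H (ℓ * p.1)
  have hbij : Function.Bijective ⇑g := Finite.injective_iff_bijective.mp g.injective
  set e : Fin (ℓ * p.1) ≃ Fin (ℓ * p.1) := Equiv.ofBijective ⇑g hbij with he
  set cls : Fin (ℓ * p.1) → Fin ℓ := fun y => ⟨(e.symm y : ℕ) % ℓ, Nat.mod_lt _ hl⟩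
    with hclsdef
  have hadjcls : ∀ y y' : Fin (ℓ * p.1), cls y ≠ cls y' → G.Adj y y' := by
    intro y y' hne
    have htur : (SimpleGraph.turanGraph (ℓ * p.1) ℓ).Adj (e.symm y) (e.symm y') := by
      simp only [SimpleGraph.turanGraph]
      intro hcon
      exact hne (Fin.ext hcon)
    have := hg _ _ htur
    have hy : g (e.symm y) = y := e.apply_symm_apply y
    have hy' : g (e.symm y') = y' := e.apply_symm_apply y'
    rwa [hy, hy'] at this
  have hcnt : ∀ k ∈ (univ : Finset (Fin ℓ)), p.1 ≤ ((univ : Finset (Fin (ℓ * p.1))).filter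
      (fun y : Fin (ℓ * p.1) => 0 ≤ (y : ℕ) ∧ cls y = k)).card := by
    intro k _
    have heq1 : ((univ : Finset (Fin (ℓ * p.1))).filter
        (fun y : Fin (ℓ * p.1) => 0 ≤ (y : ℕ) ∧ cls y = k))
        = ((univ : Finset (Fin (ℓ * p.1))).filter (fun y : Fin (ℓ * p.1) => cls y = k)) := by
      apply filter_congr
      intro y _
      simp
    rw [heq1]
    have heq2 : ((univ : Finset (Fin (ℓ * p.1))).filter
          (fun y : Fin (ℓ * p.1) => cls y = k)).card
        = ((univ : Finset (Fin (ℓ * p.1))).filter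
          (fun a : Fin (ℓ * p.1) => (a : ℕ) % ℓ = (k : ℕ))).card := by
      apply Finset.card_bij (fun y _ => e.symm y)
      · intro y hy
        simp only [mem_filter, mem_univ, true_and] at hy ⊢
        rw [hclsdef] at hy
        exact Fin.mk.inj_iff.mp hy
      · intro y₁ hy₁ y₂ hy₂ hyy
        exact e.symm.injective hyy
      · intro a ha
        refine ⟨e a, ?_, e.symm_apply_apply a⟩
        simp only [mem_filter, mem_univ, true_and] at ha ⊢
        rw [hclsdef]
        apply Fin.ext
        simp only []
        rw [e.symm_apply_apply]
        exact ha
    rw [heq2, card_residue ℓ p.1 hl (k : ℕ) k.2]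
  obtain ⟨f, hfmono, _, _, hfiff⟩ := greedy_main cls p.1
    (fun v => Fin.castLE hℓ'le (c₀ v)) hcint 0 univ (Finset.card_le_univ _) hcnt
  apply hG p hp
  refine ⟨⟨f, hfmono.injective⟩, hfmono, ?_⟩
  intro v w hadj
  apply hadjcls
  intro hcon
  exact hcprop v w hadj ((hfiff v w).mpr hcon)


/-- For a family `F` of ordered graphs and each `ℓ ∈ ℕ₊`: every size `n` admits an ordered graph
in `Forb⁺_<(F)` whose graph part contains a (not necessarily order-preserving) copy of the Turán
graph `T_{n,ℓ}` iff `ℓ < χ_<(F) := inf_{F' ∈ F} χ_<(F')`; consequently, the abstract chromatic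
number equals `max {χ_<(F), 1}`. -/
theorem stmt16 (F : Set ((m : ℕ) × SimpleGraph (Fin m))) :
    (∀ ℓ : ℕ, 0 < ℓ →
      ((∀ n : ℕ, ∃ G ∈ ForbOrd F n, HasCopy (SimpleGraph.turanGraph n ℓ) G) ↔
        (ℓ : ℕ∞) < ⨅ p ∈ F, intervalChromatic p.2)) ∧
    sSup (insert (0 : ℕ∞) ((fun ℓ : ℕ => (ℓ : ℕ∞)) ''
        {ℓ : ℕ | 0 < ℓ ∧ ∀ n : ℕ, ∃ G ∈ ForbOrd F n,
          HasCopy (SimpleGraph.turanGraph n ℓ) G})) + 1 =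
      max (⨅ p ∈ F, intervalChromatic p.2) 1 := by
  have part1 : ∀ ℓ : ℕ, 0 < ℓ →
      ((∀ n : ℕ, ∃ G ∈ ForbOrd F n, HasCopy (SimpleGraph.turanGraph n ℓ) G) ↔
        (ℓ : ℕ∞) < ⨅ p ∈ F, intervalChromatic p.2) := by
    intro ℓ hl
    constructor
    · intro H
      by_contra hcon
      exact forb_fail F ℓ hl (not_lt.mp hcon) H
    · intro hlt n
      exact exists_forb F ℓ n hl hlt
  refine ⟨part1, ?_⟩
  have hset : {ℓ : ℕ | 0 < ℓ ∧ ∀ n : ℕ, ∃ G ∈ ForbOrd F n,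
      HasCopy (SimpleGraph.turanGraph n ℓ) G}
      = {ℓ : ℕ | 0 < ℓ ∧ (ℓ : ℕ∞) < ⨅ p ∈ F, intervalChromatic p.2} := by
    ext ℓ
    simp only [Set.mem_setOf_eq]
    constructor
    · rintro ⟨hl, hP⟩
      exact ⟨hl, (part1 ℓ hl).mp hP⟩
    · rintro ⟨hl, hlt⟩
      exact ⟨hl, (part1 ℓ hl).mpr hlt⟩
  rw [hset]
  set χ : ℕ∞ := ⨅ p ∈ F, intervalChromatic p.2 with hχ
  clear_value χ
  rcases eq_or_ne χ ⊤ with htop | hfin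
  · subst htop
    have hsup : sSup (insert (0 : ℕ∞) ((fun ℓ : ℕ => (ℓ : ℕ∞)) ''
        {ℓ : ℕ | 0 < ℓ ∧ (ℓ : ℕ∞) < ⊤})) = ⊤ := by
      apply sSup_eq_top.mpr
      intro b hb
      lift b to ℕ using hb.ne
      refine ⟨((b + 1 : ℕ) : ℕ∞), Set.mem_insert_of_mem _ ⟨b + 1,
        ⟨Nat.succ_pos b, ?_⟩, rfl⟩, Nat.cast_lt.mpr (Nat.lt_succ_self b)⟩
      exact lt_top_iff_ne_top.mpr (ENat.coe_ne_top _)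
    rw [hsup]
    simp
  · lift χ to ℕ using hfin with k hk
    rcases le_or_gt k 1 with hk1 | hk1
    · have hempty : {ℓ : ℕ | 0 < ℓ ∧ (ℓ : ℕ∞) < (k : ℕ∞)} = ∅ := by
        ext ℓ
        simp only [Set.mem_setOf_eq, Set.mem_empty_iff_false, iff_false, not_and]
        intro hl hlt
        have : ℓ < k := Nat.cast_lt.mp hlt
        omega
      rw [hempty, Set.image_empty, sSup_insert, sSup_empty]
      have h2 : max ((k : ℕ∞)) 1 = 1 := max_eq_right (by exact_mod_cast hk1)
      rw [h2]
      simp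
    · have hsup : sSup (insert (0 : ℕ∞) ((fun ℓ : ℕ => (ℓ : ℕ∞)) ''
          {ℓ : ℕ | 0 < ℓ ∧ (ℓ : ℕ∞) < (k : ℕ∞)})) = ((k - 1 : ℕ) : ℕ∞) := by
        apply le_antisymm
        · apply sSup_le
          rintro b hb
          rcases Set.mem_insert_iff.mp hb with rfl | ⟨ℓ, ⟨hl, hlt⟩, rfl⟩
          · exact zero_le
          · have : ℓ < k := Nat.cast_lt.mp hlt
            exact Nat.cast_le.mpr (by omega)
        · apply le_sSup
          apply Set.mem_insert_of_mem
          exact ⟨k - 1, ⟨by omega, Nat.cast_lt.mpr (by omega)⟩, rfl⟩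
      rw [hsup]
      obtain ⟨j, rfl⟩ : ∃ j, k = j + 1 := ⟨k - 1, by omega⟩
      have h1 : ((j + 1 - 1 : ℕ) : ℕ∞) + 1 = ((j + 1 : ℕ) : ℕ∞) := by
        norm_cast
      rw [h1]
      exact (max_eq_left (by exact_mod_cast Nat.one_le_iff_ne_zero.mpr (by omega))).symm
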